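/- arXiv:2102.06392 — 3 statements merged into one kernel-verified Lean document; each statement's English description precedes it below -/
import Mathlib

section
/- (Lemma 1) Let H ∈ ℂ^{M×K} have columns h_1, …, h_K, let F ∈ ℂ^{M×K} be any beamforming matrix, let I ⊆ {1,…,M} be such that Ĥ = H_{(I,:)} has full column rank K, let W ∈ ℂ^{M×K} be the zero-padded zero-forcing extra beamformer built from Ĥ, and let a ∈ ℂ^K satisfy, for every k: a_k ≠ 0 and conj(h_k^H F_{(:,k)}) · a_k is a nonnegative real number (phase alignment; note h_k^H W_{(:,k)} = 1). Then the updated beamformer F' = F + W · diag(a) satisfies, for every k ∈ {1,…,K}: (i) |h_k^H F'_{(:,k)}|² > |h_k^H F_{(:,k)}|² (strictly increased beamforming gain), and (ii) h_k^H F'_{(:,ℓ)} = h_k^H F_{(:,ℓ)} for every ℓ ≠ k (no additional interference). -/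
open Matrix

/-- The row-restriction of `H` to the rows indexed by the finite set `I`. -/
def rowRestrict {M K : ℕ} (H : Matrix (Fin M) (Fin K) ℂ) (I : Finset (Fin M)) :
    Matrix ↥I (Fin K) ℂ := fun i k => H i.1 k

/-- The zero-padded zero-forcing extra beamformer built from `H` and the antenna set `I`. -/
noncomputable def zfPad {M K : ℕ} (H : Matrix (Fin M) (Fin K) ℂ) (I : Finset (Fin M)) :
    Matrix (Fin M) (Fin K) ℂ := fun m k =>
  if h : m ∈ I then
    (rowRestrict H I * ((rowRestrict H I)ᴴ * rowRestrict H I)⁻¹) ⟨m, h⟩ k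
  else 0

lemma isUnit_of_rank_eq_card {K : ℕ} (A : Matrix (Fin K) (Fin K) ℂ) (h : A.rank = K) :
    IsUnit A := by
  rw [← Matrix.mulVec_surjective_iff_isUnit]
  have hr : LinearMap.range A.mulVecLin = ⊤ := by
    apply Submodule.eq_top_of_finrank_eq
    rw [← Matrix.rank, h]
    simp
  intro x
  have hx : x ∈ LinearMap.range A.mulVecLin := hr ▸ Submodule.mem_top
  obtain ⟨y, hy⟩ := hx
  exact ⟨y, by simpa using hy⟩

open scoped ComplexOrder in
lemma mul_zfPad_eq_one {M K : ℕ} (H : Matrix (Fin M) (Fin K) ℂ) (I : Finset (Fin M))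
    (hrank : (rowRestrict H I).rank = K) :
    Hᴴ * zfPad H I = 1 := by
  set Hh := rowRestrict H I with hHh
  have hG : IsUnit (Hhᴴ * Hh) := by
    apply isUnit_of_rank_eq_card
    rw [Matrix.rank_conjTranspose_mul_self, hrank]
  have key : Hᴴ * zfPad H I = Hhᴴ * (Hh * (Hhᴴ * Hh)⁻¹) := by
    ext k l
    rw [Matrix.mul_apply, Matrix.mul_apply]
    set f : Fin M → ℂ := fun m =>
      if h : m ∈ I then Hhᴴ k ⟨m, h⟩ * (Hh * (Hhᴴ * Hh)⁻¹) ⟨m, h⟩ l else 0 with hf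
    have hterm : ∀ m : Fin M, Hᴴ k m * zfPad H I m l = f m := by
      intro m
      by_cases h : m ∈ I
      · simp [zfPad, h, Matrix.conjTranspose_apply, hHh, rowRestrict, hf]
      · simp [zfPad, h, hf]
    simp_rw [hterm]
    calc ∑ m : Fin M, f m
        = ∑ m ∈ I, f m :=
          (Finset.sum_subset I.subset_univ (fun x _ hx => by simp [hf, hx])).symm
      _ = ∑ i ∈ I.attach, f i.1 := (Finset.sum_attach I f).symm
      _ = ∑ i : ↥I, Hhᴴ k i * (Hh * (Hhᴴ * Hh)⁻¹) i l := by
          rw [Finset.univ_eq_attach]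
          refine Finset.sum_congr rfl fun i _ => ?_
          exact dif_pos i.2
  rw [key, ← Matrix.mul_assoc, Matrix.mul_nonsing_inv _ (Matrix.isUnit_iff_isUnit_det _ |>.mp hG)]

/-- Lemma 1: the CPR update with a zero-forcing extra beamformer strictly increases every
beamforming gain and adds no interference. -/
theorem cpr_update_gain_and_no_interference {M K : ℕ} (hK : 0 < K) (hKM : K ≤ M)
    (H F : Matrix (Fin M) (Fin K) ℂ) (I : Finset (Fin M))
    (hrank : (rowRestrict H I).rank = K)
    (a : Fin K → ℂ)
    (ha0 : ∀ k, a k ≠ 0)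
    (halign : ∀ k, ∃ r : ℝ, 0 ≤ r ∧ star ((Hᴴ * F) k k) * a k = (r : ℂ))
    (F' : Matrix (Fin M) (Fin K) ℂ)
    (hF' : F' = F + zfPad H I * Matrix.diagonal a) :
    ∀ k, ‖(Hᴴ * F) k k‖ ^ 2 < ‖(Hᴴ * F') k k‖ ^ 2 ∧
      ∀ ℓ, ℓ ≠ k → (Hᴴ * F') k ℓ = (Hᴴ * F) k ℓ := by
  have hone : Hᴴ * zfPad H I = 1 := mul_zfPad_eq_one H I hrank
  have hF'' : Hᴴ * F' = Hᴴ * F + Matrix.diagonal a := by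
    rw [hF', Matrix.mul_add, ← Matrix.mul_assoc, hone, Matrix.one_mul]
  intro k
  constructor
  · obtain ⟨r, hr, hra⟩ := halign k
    set c := (Hᴴ * F) k k with hc
    have hv : (Hᴴ * F') k k = c + a k := by
      rw [hF'']; simp [Matrix.add_apply]; rfl
    rw [hv, Complex.sq_norm, Complex.sq_norm, Complex.normSq_add]
    have h1 : (c * (starRingEnd ℂ) (a k)).re = r := by
      have hs : c * (starRingEnd ℂ) (a k) = star (star c * a k) := by
        rw [star_mul']
        simp
      rw [hs, hra]
      simp
    rw [h1]
    have h2 : 0 < Complex.normSq (a k) := Complex.normSq_pos.mpr (ha0 k)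
    linarith
  · intro l hl
    rw [hF'']
    simp [Matrix.add_apply, Matrix.diagonal_apply_ne' _ hl]
end

section
/- (Remark) Let H ∈ ℂ^{M×K} have columns h_1, …, h_K. Define F_0 = 0 ∈ ℂ^{M×K} and, for n ≥ 1, F_n = F_{n-1} + W_n · diag(a_n), where each W_n ∈ ℂ^{M×K} is the zero-padded zero-forcing extra beamformer built from some index set I_n ⊆ {1,…,M} for which H_{(I_n,:)} has full column rank K, and each a_n ∈ ℂ^K satisfies, for every k: (a_n)_k ≠ 0 and conj(h_k^H (F_{n-1})_{(:,k)}) · (a_n)_k is a nonnegative real number. Then for every n ≥ 1 and every k ≠ ℓ, h_k^H (F_n)_{(:,ℓ)} = 0 (each F_n is a zero-interference beamformer), and for every k the beamforming gain |h_k^H (F_n)_{(:,k)}|² is strictly increasing in n. -/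
open Matrix

lemma isUnit_det_of_rank_eq {K : ℕ} (A : Matrix (Fin K) (Fin K) ℂ)
    (h : A.rank = K) : IsUnit A.det := by
  rw [isUnit_iff_ne_zero]
  intro hdet
  obtain ⟨v, hv, hAv⟩ := (Matrix.exists_mulVec_eq_zero_iff).2 hdet
  have hker : v ∈ LinearMap.ker A.mulVecLin := by simpa [Matrix.mulVecLin_apply] using hAv
  have hrn := LinearMap.finrank_range_add_finrank_ker A.mulVecLin
  have hkerbot : LinearMap.ker A.mulVecLin = ⊥ := by
    have : Module.finrank ℂ (LinearMap.ker A.mulVecLin) = 0 := by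
      have hdom : Module.finrank ℂ (Fin K → ℂ) = K := by simp
      rw [hdom] at hrn
      have : Matrix.rank A = Module.finrank ℂ (LinearMap.range A.mulVecLin) := rfl
      omega
    exact Submodule.finrank_eq_zero.mp this
  rw [hkerbot] at hker
  exact hv (by simpa using hker)

lemma conjT_mul_zfPad {M K : ℕ} (H : Matrix (Fin M) (Fin K) ℂ) (I : Finset (Fin M))
    (h : (rowRestrict H I).rank = K) : Hᴴ * zfPad H I = 1 := by
  set B := rowRestrict H I with hB
  have hrank : (Bᴴ * B).rank = K := by
    open scoped ComplexOrder in
    rw [Matrix.rank_conjTranspose_mul_self, h]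
  have hunit : IsUnit (Bᴴ * B).det := isUnit_det_of_rank_eq _ hrank
  have key : Bᴴ * (B * (Bᴴ * B)⁻¹) = 1 := by
    rw [← Matrix.mul_assoc, Matrix.mul_nonsing_inv _ hunit]
  ext k ℓ
  have : (Hᴴ * zfPad H I) k ℓ = (Bᴴ * (B * (Bᴴ * B)⁻¹)) k ℓ := by
    simp only [Matrix.mul_apply, conjTranspose_apply]
    rw [show (∑ m : Fin M, star (H m k) * zfPad H I m ℓ)
        = ∑ m ∈ I, star (H m k) * zfPad H I m ℓ from
        (Finset.sum_subset I.subset_univ (fun m _ hm => by simp [zfPad, hm])).symm,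
      ← Finset.sum_attach I (fun m => star (H m k) * zfPad H I m ℓ)]
    apply Finset.sum_congr rfl
    intro i _
    simp [zfPad, hB, rowRestrict, i.2, Matrix.mul_apply]
  rw [this, key]

/-- Remark: starting from the all-zero beamformer, every CPR iterate is a zero-interference
(zero-forcing) beamformer, and the beamforming gain of every UE is strictly increasing
along the iterations. -/
theorem cpr_iterates_zero_interference_and_strictMono_gain {M K : ℕ}
    (hK : 0 < K) (hKM : K ≤ M)
    (H : Matrix (Fin M) (Fin K) ℂ)
    (F : ℕ → Matrix (Fin M) (Fin K) ℂ)
    (I : ℕ → Finset (Fin M))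
    (a : ℕ → Fin K → ℂ)
    (hF0 : F 0 = 0)
    (hrank : ∀ n : ℕ, (rowRestrict H (I (n + 1))).rank = K)
    (hrec : ∀ n : ℕ, F (n + 1) = F n + zfPad H (I (n + 1)) * Matrix.diagonal (a (n + 1)))
    (ha0 : ∀ n : ℕ, ∀ k, a (n + 1) k ≠ 0)
    (halign : ∀ n : ℕ, ∀ k, ∃ r : ℝ, 0 ≤ r ∧
      star ((Hᴴ * F n) k k) * a (n + 1) k = (r : ℂ)) :
    (∀ n : ℕ, 1 ≤ n → ∀ k ℓ, k ≠ ℓ → (Hᴴ * F n) k ℓ = 0) ∧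
      ∀ k, StrictMono (fun n : ℕ => ‖(Hᴴ * F n) k k‖ ^ 2) := by
  have hstep : ∀ n : ℕ, Hᴴ * F (n + 1) = Hᴴ * F n + Matrix.diagonal (a (n + 1)) := by
    intro n
    rw [hrec n, Matrix.mul_add, ← Matrix.mul_assoc, conjT_mul_zfPad H _ (hrank n),
      Matrix.one_mul]
  constructor
  · intro n hn k ℓ hkl
    induction n with
    | zero => omega
    | succ m ih =>
      rw [hstep m, Matrix.add_apply, Matrix.diagonal_apply_ne _ hkl]
      rcases Nat.eq_zero_or_pos m with hm | hm
      · simp [hm, hF0]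
      · rw [ih hm]; ring
  · intro k
    have hstepd : ∀ n : ℕ, ‖(Hᴴ * F n) k k‖ ^ 2 <
        ‖(Hᴴ * F (n + 1)) k k‖ ^ 2 := by
      intro n
      obtain ⟨r, hr, hra⟩ := halign n k
      have hd : (Hᴴ * F (n + 1)) k k = (Hᴴ * F n) k k + a (n + 1) k := by
        rw [hstep n, Matrix.add_apply, Matrix.diagonal_apply_eq]
      set d := (Hᴴ * F n) k k
      set α := a (n + 1) k
      have habs : ‖d + α‖ ^ 2 =
          ‖d‖ ^ 2 + 2 * r + ‖α‖ ^ 2 := by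
        have h1 : ‖d + α‖ ^ 2 = Complex.normSq (d + α) := by
          rw [Complex.sq_norm]
        have h2 : Complex.normSq (d + α) = Complex.normSq d + 2 * (star d * α).re
            + Complex.normSq α := by
          simp [Complex.normSq_apply, Complex.add_re, Complex.add_im, Complex.mul_re,
            Complex.star_def, Complex.conj_re, Complex.conj_im]
          ring
        rw [h1, h2, ← Complex.sq_norm, ← Complex.sq_norm α, hra]
        norm_num
      have hα : 0 < ‖α‖ ^ 2 := by
        exact pow_pos (norm_pos_iff.mpr (ha0 n k)) 2
      rw [hd, habs]
      linarith
    exact strictMono_nat_of_lt_succ hstepd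
end

section
/- Let h ∈ ℂ^M, P_ant > 0 and P_tot = M · P_ant. Define f' ∈ ℂ^M by f'_m = √P_ant · h_m / |h_m| if h_m ≠ 0 and f'_m = √P_ant if h_m = 0. Then |f'_m|² = P_ant for all m, ‖f'‖² = P_tot, |h^H f'|² = P_ant · (∑_{m=1}^M |h_m|)², and f' maximizes the beamforming gain: for every f ∈ ℂ^M with ‖f‖² ≤ P_tot and |f_m|² ≤ P_ant for all m, one has |h^H f|² ≤ |h^H f'|². -/
/-- The beamformer `f'` with `f'_m = √P_ant · h_m/|h_m|` (and `f'_m = √P_ant` when `h_m = 0`)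
uses the maximum power at every antenna, uses the maximum total power `P_tot = M·P_ant`,
achieves the gain `P_ant (∑_m |h_m|)²`, and maximizes the MISO beamforming gain among all
beamformers satisfying the total power constraint and the per-antenna power constraint. -/
theorem miso_optimal_beamformer {M : ℕ} (h : Fin M → ℂ) (Pant Ptot : ℝ)
    (hPant : 0 < Pant) (hPtot : Ptot = M * Pant)
    (f' : Fin M → ℂ)
    (hf' : ∀ m, f' m = if h m = 0 then (Real.sqrt Pant : ℂ)
      else (Real.sqrt Pant : ℂ) * h m / (‖h m‖ : ℂ)) :
    (∀ m, ‖f' m‖ ^ 2 = Pant) ∧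
    (∑ m, ‖f' m‖ ^ 2) = Ptot ∧
    ‖∑ m, star (h m) * f' m‖ ^ 2 = Pant * (∑ m, ‖h m‖) ^ 2 ∧
    ∀ f : Fin M → ℂ, (∑ m, ‖f m‖ ^ 2) ≤ Ptot →
      (∀ m, ‖f m‖ ^ 2 ≤ Pant) →
      ‖∑ m, star (h m) * f m‖ ^ 2 ≤ ‖∑ m, star (h m) * f' m‖ ^ 2 := by
  have hSnn : (0:ℝ) ≤ ∑ m, ‖h m‖ :=
    Finset.sum_nonneg fun m _ => norm_nonneg _
  have habs : ∀ m, ‖f' m‖ = Real.sqrt Pant := by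
    intro m
    rw [hf']
    split_ifs with hm
    · simp [Complex.norm_real, abs_of_nonneg (Real.sqrt_nonneg _)]
    · have hne : ‖h m‖ ≠ 0 := norm_ne_zero_iff.mpr hm
      rw [norm_div, norm_mul]
      simp only [Complex.norm_real, Real.norm_eq_abs, abs_of_nonneg (Real.sqrt_nonneg _),
        abs_of_nonneg (norm_nonneg (h m))]
      field_simp
  have hsq : ∀ m, ‖f' m‖ ^ 2 = Pant := by
    intro m; rw [habs, Real.sq_sqrt hPant.le]
  have hterm : ∀ m, star (h m) * f' m = ((Real.sqrt Pant * ‖h m‖ : ℝ) : ℂ) := by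
    intro m
    rw [hf']
    split_ifs with hm
    · simp [hm]
    · have hne : (‖h m‖ : ℂ) ≠ 0 := by
        exact_mod_cast Complex.ofReal_ne_zero.mpr (norm_ne_zero_iff.mpr hm)
      have hconj : (starRingEnd ℂ) (h m) * h m = ((‖h m‖ : ℝ) ^ 2 : ℂ) := by
        rw [mul_comm, Complex.mul_conj, Complex.normSq_eq_norm_sq]
        push_cast; ring
      field_simp
      have hstar : star (h m) = (starRingEnd ℂ) (h m) := rfl
      rw [hstar]
      push_cast
      linear_combination (↑√Pant : ℂ) * hconj
  have hsum : (∑ m, star (h m) * f' m)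
      = ((Real.sqrt Pant * ∑ m, ‖h m‖ : ℝ) : ℂ) := by
    rw [Finset.mul_sum]
    push_cast
    exact Finset.sum_congr rfl fun m _ => by rw [hterm]; push_cast; ring
  have habsSum : ‖∑ m, star (h m) * f' m‖
      = Real.sqrt Pant * ∑ m, ‖h m‖ := by
    rw [hsum, Complex.norm_real, Real.norm_eq_abs,
      abs_of_nonneg (mul_nonneg (Real.sqrt_nonneg _) hSnn)]
  refine ⟨hsq, ?_, ?_, ?_⟩
  · simp [hsq, hPtot, Finset.sum_const, mul_comm]
  · rw [habsSum, mul_pow, Real.sq_sqrt hPant.le]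
  · intro f htot hper
    rw [habsSum]
    have hfb : ∀ m, ‖f m‖ ≤ Real.sqrt Pant := by
      intro m
      have := hper m
      nlinarith [norm_nonneg (f m), Real.sq_sqrt hPant.le,
        Real.sqrt_nonneg Pant]
    have h1 : ‖∑ m, star (h m) * f m‖
        ≤ Real.sqrt Pant * ∑ m, ‖h m‖ := by
      calc ‖∑ m, star (h m) * f m‖
          ≤ ∑ m, ‖star (h m) * f m‖ :=
            norm_sum_le _ _
        _ ≤ ∑ m, ‖h m‖ * Real.sqrt Pant := by
            apply Finset.sum_le_sum
            intro m _
            rw [norm_mul]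
            have : ‖star (h m)‖ = ‖h m‖ := by
              simp
            rw [this]
            exact mul_le_mul_of_nonneg_left (hfb m) (norm_nonneg _)
        _ = Real.sqrt Pant * ∑ m, ‖h m‖ := by
            rw [← Finset.sum_mul, mul_comm]
    exact pow_le_pow_left₀ (norm_nonneg _) h1 2
end
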